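/- Let p be a permutation of {1,...,n} avoiding the pattern 1324, colored red/blue by the greedy procedure (color p_i blue if coloring it red would create an all-red 132-pattern, or if some blue entry smaller than p_i already exists; otherwise red), and let w(p) be the word over {A,B,C,D} assigning to position i: A if p_i is red and a left-to-right minimum among red entries, B if red but not such a minimum, C if blue and not a right-to-left maximum among blue entries, D if blue and such a maximum. Then w(p) never has a letter C immediately followed by a letter B. -/
import Mathlib


inductive Letter | A | B | C | D
deriving DecidableEq

def NoCB (w : List Letter) : Prop :=
  List.Chain' (fun a b => ¬(a = Letter.C ∧ b = Letter.B)) w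

noncomputable def hword (n : ℕ) : ℕ :=
  Nat.card {w : List Letter // w.length = n ∧ NoCB w}
def redCond (p : ℕ → ℕ) (c : List Bool) (i : ℕ) : Bool :=
  decide (¬ ∃ j < i, ∃ k < i, j < k ∧ c.getD j false = true ∧ c.getD k false = true ∧
      p j < p i ∧ p i < p k) &&
  decide (¬ ∃ j < i, c.getD j false = false ∧ p j < p i)

def colorsAux (p : ℕ → ℕ) : ℕ → List Bool
  | 0 => []
  | i+1 => colorsAux p i ++ [redCond p (colorsAux p i) i]

/-- `isRed p i = true` iff the greedy procedure colors the entry in position `i` red. -/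
def isRed (p : ℕ → ℕ) (i : ℕ) : Bool := (colorsAux p (i+1)).getD i false

/-- The type of the entry in position `i` of a permutation of `{0,...,n-1}`:
`A` = red left-to-right minimum of the red subsequence, `B` = other red,
`D` = blue right-to-left maximum of the blue subsequence, `C` = other blue. -/
def typeOf (n : ℕ) (p : ℕ → ℕ) (i : ℕ) : Letter :=
  if isRed p i then
    if ∀ j < i, isRed p j = true → p i < p j then Letter.A else Letter.B
  else
    if ∀ j < n, i < j → isRed p j = false → p j < p i then Letter.D else Letter.C

def toNatFun {n : ℕ} (p : Equiv.Perm (Fin n)) : ℕ → ℕ :=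
  fun i => if h : i < n then (p ⟨i, h⟩ : ℕ) else i

def Avoids1324 {n : ℕ} (p : Equiv.Perm (Fin n)) : Prop :=
  ¬ ∃ i₁ i₂ i₃ i₄ : Fin n, i₁ < i₂ ∧ i₂ < i₃ ∧ i₃ < i₄ ∧
    p i₁ < p i₃ ∧ p i₃ < p i₂ ∧ p i₂ < p i₄

/-- The word `w(p)`: types by position. -/
def wWord {n : ℕ} (p : Equiv.Perm (Fin n)) (i : Fin n) : Letter :=
  typeOf n (toNatFun p) i

/-- The word `z(p)`: types by value. -/
def zWord {n : ℕ} (p : Equiv.Perm (Fin n)) (v : Fin n) : Letter :=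
  typeOf n (toNatFun p) (p.symm v)

lemma colorsAux_length (p : ℕ → ℕ) (m : ℕ) : (colorsAux p m).length = m := by
  induction m with
  | zero => rfl
  | succ m ih => simp [colorsAux, ih]

lemma getD_colorsAux (p : ℕ → ℕ) (m j : ℕ) (hj : j < m) :
    (colorsAux p m).getD j false = isRed p j := by
  induction m with
  | zero => omega
  | succ m ih =>
    rcases Nat.lt_or_ge j m with h' | h'
    · rw [colorsAux, List.getD_append _ _ _ _ (by rw [colorsAux_length]; exact h')]
      exact ih h'
    · have : j = m := by omega
      subst this
      rfl

lemma isRed_eq (p : ℕ → ℕ) (i : ℕ) : isRed p i = redCond p (colorsAux p i) i := by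
  show (colorsAux p (i+1)).getD i false = _
  rw [colorsAux]
  rw [List.getD_eq_getElem?_getD, List.getElem?_append_right (by rw [colorsAux_length])]
  simp [colorsAux_length]


lemma key {n : ℕ} (p : Equiv.Perm (Fin n)) (hp : Avoids1324 p)
    (i : Fin n) (h : (i : ℕ) + 1 < n)
    (q : ℕ → ℕ) (hq : q = toNatFun p)
    (hblueI : isRed q ↑i = false)
    (hredI1 : isRed q (↑i+1) = true)
    (b : ℕ) (hbn : b < n) (hib : ↑i < b) (hbblue : isRed q b = false) (hbge : ¬ q b < q ↑i)
    (r : ℕ) (hri : r < ↑i + 1) (hrred : isRed q r = true) (hrle : ¬ q (↑i+1) < q r) :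
    False := by
  have hqv : ∀ a (ha : a < n), q a = (p ⟨a, ha⟩ : ℕ) := by
    intro a ha; simp [hq, toNatFun, ha]
  have hinj : ∀ a b, a < n → b < n → q a = q b → a = b := by
    intro a b ha hb hab
    rw [hqv a ha, hqv b hb] at hab
    have := p.injective (Fin.val_injective hab)
    exact Fin.mk.inj_iff.mp this
  -- q (i+1) < q i
  have h1 : q (↑i+1) < q ↑i := by
    have h2 : redCond q (colorsAux q (↑i+1)) (↑i+1) = true := (isRed_eq q (↑i+1)).symm.trans hredI1
    rw [redCond, Bool.and_eq_true, decide_eq_true_iff, decide_eq_true_iff] at h2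
    have h3 := h2.2
    push_neg at h3
    have h4 := h3 ↑i (by omega)
    rw [getD_colorsAux _ _ _ (by omega), hblueI] at h4
    have h5 := h4 rfl
    have hne : q (↑i+1) ≠ q ↑i := fun e => by
      have := hinj _ _ h (by omega) e; omega
    omega
  have hrne : r ≠ ↑i := fun e => by rw [e, hblueI] at hrred; exact Bool.noConfusion hrred
  have hri' : r < ↑i := by omega
  have h2 : q r < q (↑i+1) := by
    have hne : q r ≠ q (↑i+1) := fun e => by
      have := hinj _ _ (by omega) h e; omega
    omega
  have hbne : b ≠ ↑i + 1 := fun e => by rw [e, hredI1] at hbblue; exact Bool.noConfusion hbblue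
  have hib1 : ↑i + 1 < b := by omega
  have h3 : q ↑i < q b := by
    have hne : q b ≠ q ↑i := fun e => by
      have := hinj _ _ hbn i.isLt e; omega
    omega
  apply hp
  refine ⟨⟨r, by omega⟩, i, ⟨↑i+1, h⟩, ⟨b, hbn⟩, ?_, ?_, ?_, ?_, ?_, ?_⟩
  · rw [Fin.lt_def]; exact hri'
  · simp [Fin.lt_def]
  · rw [Fin.lt_def]; exact hib1
  · rw [Fin.lt_def]; rw [hqv r (by omega), hqv (↑i+1) h] at h2; exact h2
  · rw [Fin.lt_def]
    rw [hqv (↑i+1) h, hqv ↑i i.isLt] at h1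
    simpa using h1
  · rw [Fin.lt_def]
    rw [hqv ↑i i.isLt, hqv b hbn] at h3
    simpa using h3


/-- The word w(p) of a 1324-avoiding permutation has no CB-factor. -/
theorem stmt5 {n : ℕ} (p : Equiv.Perm (Fin n)) (hp : Avoids1324 p) :
    ∀ (i : Fin n) (h : (i : ℕ) + 1 < n),
      ¬(wWord p i = Letter.C ∧ wWord p ⟨(i : ℕ) + 1, h⟩ = Letter.B) := by
  rintro i h ⟨hC, hB⟩
  set q := toNatFun p with hq
  -- position i+1 is red
  have hredI1 : isRed q (↑i+1) = true := by
    by_contra hr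
    rw [Bool.not_eq_true] at hr
    rw [wWord, typeOf, hr] at hB
    simp only [Bool.false_eq_true, if_false] at hB
    split at hB <;> exact Letter.noConfusion hB
  -- position i is blue
  have hblueI : isRed q ↑i = false := by
    by_contra hr
    rw [Bool.not_eq_false] at hr
    rw [wWord, typeOf, hr, if_pos rfl] at hC
    split at hC <;> exact Letter.noConfusion hC
  -- extract b from C condition
  rw [wWord, typeOf, hblueI] at hC
  simp only [Bool.false_eq_true, if_false] at hC
  have hCcond : ¬ ∀ j < n, ↑i < j → isRed q j = false → q j < q ↑i := by
    intro hcond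
    rw [if_pos hcond] at hC
    exact Letter.noConfusion hC
  push_neg at hCcond
  obtain ⟨b, hbn, hib, hbblue, hbge⟩ := hCcond
  -- extract r from B condition
  rw [wWord, typeOf] at hB
  simp only at hB
  rw [if_pos hredI1] at hB
  have hBcond : ¬ ∀ j < (↑i : ℕ) + 1, isRed q j = true → q ((↑i : ℕ)+1) < q j := by
    intro hcond
    rw [if_pos hcond] at hB
    exact Letter.noConfusion hB
  push_neg at hBcond
  obtain ⟨r, hri, hrred, hrle⟩ := hBcond
  exact key p hp i h q hq hblueI hredI1 b hbn hib hbblue (not_lt.mpr hbge) r hri hrred (not_lt.mpr hrle)
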